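/- There exist a finite group G and subgroups H, K ≤ G such that H and K are not conjugate in G, yet |H ∩ C| = |K ∩ C| for every conjugacy class C of G (and hence the weak Fourier sampling distributions of H and K coincide: D(H,K) = 0). -/

import Mathlib

open CategoryTheory Finset
open scoped Classical

/-- `D_H`: the total variation distance between the weak quantum Fourier sampling
distributions for the hidden subgroup `H` and for the trivial subgroup, namely
`(1/|G|) · Σ_ρ d_ρ · |Σ_{h ∈ H, h ≠ e} χ_ρ(h)|`, where `ρ` runs over the family
of irreducible representations. -/
noncomputable def weakDist {G : Type} [Group G] [Fintype G] {ι : Type} [Fintype ι]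
    (ρ : ι → FDRep ℂ G) (H : Subgroup G) : ℝ :=
  (Fintype.card G : ℝ)⁻¹ *
    ∑ i : ι, (Module.finrank ℂ (ρ i) : ℝ) *
      ‖∑ h ∈ Finset.univ.filter (fun h : G => h ∈ H ∧ h ≠ 1), (ρ i).character h‖

/-- `ρ : ι → FDRep ℂ G` is a complete family of pairwise non-isomorphic irreducible
complex representations of `G` (one per isomorphism class). -/
def IsCompleteIrrepFamily {G : Type} [Group G] {ι : Type} (ρ : ι → FDRep ℂ G) : Prop :=
  (∀ i, Simple (ρ i)) ∧
  (∀ i j, Nonempty (ρ i ≅ ρ j) → i = j) ∧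
  (∀ V : FDRep ℂ G, Simple V → ∃ i, Nonempty (ρ i ≅ V))

/-! ### The example group: `Hol(C₈) = Z/8 ⋊ (Z/8)ˣ`, of order 32. -/

def G13 : Type := ZMod 8 × ZMod 2 × ZMod 2

instance : DecidableEq G13 := inferInstanceAs (DecidableEq (ZMod 8 × ZMod 2 × ZMod 2))
instance : Fintype G13 := inferInstanceAs (Fintype (ZMod 8 × ZMod 2 × ZMod 2))

/-- `uu s t = 3^s * 5^t : (ZMod 8)ˣ` coded as an element of `ZMod 8`. -/
def uu (s t : ZMod 2) : ZMod 8 := (if s = 1 then 3 else 1) * (if t = 1 then 5 else 1)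

instance : Mul G13 :=
  ⟨fun x y => (x.1 + uu x.2.1 x.2.2 * y.1, x.2.1 + y.2.1, x.2.2 + y.2.2)⟩
instance : One G13 := ⟨((0 : ZMod 8), (0 : ZMod 2), (0 : ZMod 2))⟩
instance : Inv G13 := ⟨fun x => (-(uu x.2.1 x.2.2 * x.1), x.2.1, x.2.2)⟩

lemma G13.mul_def (a b : G13) :
    a * b = (a.1 + uu a.2.1 a.2.2 * b.1, a.2.1 + b.2.1, a.2.2 + b.2.2) := rfl

lemma uu_add : ∀ s t s' t' : ZMod 2, uu (s + s') (t + t') = uu s t * uu s' t' := by decide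

instance : Group G13 :=
  Group.ofLeftAxioms
    (fun a b c => by
      rw [G13.mul_def (a * b), G13.mul_def a b, G13.mul_def a (b * c), G13.mul_def b c]
      simp only [uu_add]
      exact Prod.ext (by ring) (Prod.ext (by ring) (by ring)))
    (by decide) (by decide)

def el (a : ZMod 8) (s t : ZMod 2) : G13 := (a, s, t)

def Hset : Finset G13 := {el 0 0 0, el 2 1 1, el 4 0 1, el 6 1 0}
def Kset : Finset G13 := {el 0 0 0, el 0 1 1, el 4 1 0, el 4 0 1}

def H13 : Subgroup G13 where
  carrier := {x | x ∈ Hset}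
  mul_mem' := by decide
  one_mem' := by decide
  inv_mem' := by decide

def K13 : Subgroup G13 where
  carrier := {x | x ∈ Kset}
  mul_mem' := by decide
  one_mem' := by decide
  inv_mem' := by decide

instance : DecidablePred (· ∈ H13) := fun x => decidable_of_iff (x ∈ Hset) Iff.rfl
instance : DecidablePred (· ∈ K13) := fun x => decidable_of_iff (x ∈ Kset) Iff.rfl

lemma key_count : ∀ g : G13,
    (univ.filter (fun x : G13 => (∃ c : G13, c * g * c⁻¹ = x) ∧ x ∈ Hset)).card
      = (univ.filter (fun x : G13 => (∃ c : G13, c * g * c⁻¹ = x) ∧ x ∈ Kset)).card := by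
  decide

lemma key_nonconj : ∀ g : G13,
    ¬ (g * el 2 1 1 * g⁻¹ ∈ Kset ∧ g * el 4 0 1 * g⁻¹ ∈ Kset ∧ g * el 6 1 0 * g⁻¹ ∈ Kset) := by
  decide

/-- there exist a finite group `G` and non-conjugate subgroups
`H, K ≤ G` intersecting every conjugacy class of `G` in sets of equal size
(hence with coinciding weak Fourier sampling distributions, `D(H,K) = 0`). -/
theorem stmt_13 :
    ∃ (G : Type) (_ : Group G) (_ : Fintype G) (H K : Subgroup G),
      (¬ ∃ g : G, Subgroup.map (MulAut.conj g).toMonoidHom H = K) ∧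
        ∀ c : ConjClasses G,
          Nat.card (c.carrier ∩ (H : Set G) : Set G)
            = Nat.card (c.carrier ∩ (K : Set G) : Set G) := by
  refine ⟨G13, inferInstance, inferInstance, H13, K13, ?_, ?_⟩
  · rintro ⟨g, hg⟩
    have h2 : (MulAut.conj g).toMonoidHom (el 2 1 1) ∈ K13 :=
      hg ▸ Subgroup.mem_map_of_mem _ (show el 2 1 1 ∈ H13 by decide)
    have h4 : (MulAut.conj g).toMonoidHom (el 4 0 1) ∈ K13 :=
      hg ▸ Subgroup.mem_map_of_mem _ (show el 4 0 1 ∈ H13 by decide)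
    have h6 : (MulAut.conj g).toMonoidHom (el 6 1 0) ∈ K13 :=
      hg ▸ Subgroup.mem_map_of_mem _ (show el 6 1 0 ∈ H13 by decide)
    exact key_nonconj g ⟨h2, h4, h6⟩
  · intro c
    obtain ⟨g, rfl⟩ := ConjClasses.mk_surjective c
    have e1 : ((ConjClasses.mk g).carrier ∩ (H13 : Set G13))
        = ↑(univ.filter (fun x : G13 => (∃ c : G13, c * g * c⁻¹ = x) ∧ x ∈ Hset)) := by
      ext x
      simp only [Set.mem_inter_iff, ConjClasses.mem_carrier_iff_mk_eq,
        ConjClasses.mk_eq_mk_iff_isConj, Finset.coe_filter, Set.mem_setOf_eq,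
        Finset.mem_univ, true_and, SetLike.mem_coe]
      rw [isConj_comm, isConj_iff]
      exact Iff.rfl
    have e2 : ((ConjClasses.mk g).carrier ∩ (K13 : Set G13))
        = ↑(univ.filter (fun x : G13 => (∃ c : G13, c * g * c⁻¹ = x) ∧ x ∈ Kset)) := by
      ext x
      simp only [Set.mem_inter_iff, ConjClasses.mem_carrier_iff_mk_eq,
        ConjClasses.mk_eq_mk_iff_isConj, Finset.coe_filter, Set.mem_setOf_eq,
        Finset.mem_univ, true_and, SetLike.mem_coe]
      rw [isConj_comm, isConj_iff]
      exact Iff.rfl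
    rw [e1, e2, Nat.card_coe_set_eq, Nat.card_coe_set_eq,
      Set.ncard_coe_finset, Set.ncard_coe_finset]
    exact key_count g
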